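/- Consider the planar system ẋ₁ = x₁² − 2x₁ + x₂, ẋ₂ = x₁ + x₂² − 2x₂, with initial set I = {(x₁,x₂) : x₁² + x₂² ≤ 0.01} and unsafe set U = {(x₁,x₂) : x₁² + x₂² ≥ 0.25}. Then every differentiable trajectory x : [0,∞) → ℝ² with x′(t) = f(x(t)) for all t ≥ 0 and x(0) ∈ I satisfies x₁(t)² + x₂(t)² ≤ 0.04 for all t ≥ 0; in particular x(t) ∉ U for all t ≥ 0. -/

import Mathlib

/-- For the planar system `ẋ₁ = x₁² − 2x₁ + x₂`, `ẋ₂ = x₁ + x₂² − 2x₂`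
with initial set `{x₁² + x₂² ≤ 0.01}` and unsafe set `{x₁² + x₂² ≥ 0.25}`,
every trajectory satisfies `x₁(t)² + x₂(t)² ≤ 0.04` for all `t ≥ 0`; in
particular it never enters the unsafe set. -/
theorem planar_system_safe (x₁ x₂ : ℝ → ℝ)
    (h₁ : ∀ t ≥ (0:ℝ), HasDerivAt x₁ ((x₁ t) ^ 2 - 2 * x₁ t + x₂ t) t)
    (h₂ : ∀ t ≥ (0:ℝ), HasDerivAt x₂ (x₁ t + (x₂ t) ^ 2 - 2 * x₂ t) t)
    (hinit : (x₁ 0) ^ 2 + (x₂ 0) ^ 2 ≤ 0.01) :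
    ∀ t ≥ (0:ℝ),
      (x₁ t) ^ 2 + (x₂ t) ^ 2 ≤ 0.04 ∧
      ¬((x₁ t) ^ 2 + (x₂ t) ^ 2 ≥ 0.25) := by
  set g : ℝ → ℝ := fun t => (x₁ t) ^ 2 + (x₂ t) ^ 2 with hg
  set h : ℝ → ℝ := fun t => Real.exp (1.08 * t) * (g t - 0.04) with hh
  have hgderiv : ∀ t ≥ (0:ℝ), HasDerivAt g
      (2 * x₁ t * ((x₁ t) ^ 2 - 2 * x₁ t + x₂ t)
        + 2 * x₂ t * (x₁ t + (x₂ t) ^ 2 - 2 * x₂ t)) t := by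
    intro t ht
    have := ((h₁ t ht).pow 2).add ((h₂ t ht).pow 2)
    refine this.congr_deriv ?_
    ring
  have hhderiv : ∀ t ≥ (0:ℝ), HasDerivAt h
      (1.08 * Real.exp (1.08 * t) * (g t - 0.04)
        + Real.exp (1.08 * t) * (2 * x₁ t * ((x₁ t) ^ 2 - 2 * x₁ t + x₂ t)
          + 2 * x₂ t * (x₁ t + (x₂ t) ^ 2 - 2 * x₂ t))) t := by
    intro t ht
    have he : HasDerivAt (fun t => Real.exp (1.08 * t)) (1.08 * Real.exp (1.08 * t)) t := by
      have := (Real.hasDerivAt_exp (1.08 * t)).comp t ((hasDerivAt_id t).const_mul 1.08)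
      simpa [Function.comp_def, mul_comm] using this
    exact he.mul ((hgderiv t ht).sub_const 0.04)
  have main : ∀ t ≥ (0:ℝ), g t ≤ 0.04 := by
    intro t₀ ht₀
    by_contra hcon
    push_neg at hcon
    have hg0 : g 0 ≤ 0.01 := hinit
    have ht₀' : (0:ℝ) < t₀ := by
      rcases lt_or_eq_of_le ht₀ with h' | h'
      · exact h'
      · exfalso; rw [← h'] at hcon; linarith
    set A : Set ℝ := Set.Icc 0 t₀ ∩ g ⁻¹' Set.Ici 0.04 with hA
    have hgc : ContinuousOn g (Set.Icc 0 t₀) := fun t ht =>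
      ((hgderiv t ht.1).continuousAt).continuousWithinAt
    have hAclosed : IsClosed A :=
      hgc.preimage_isClosed_of_isClosed isClosed_Icc isClosed_Ici
    have hAcompact : IsCompact A :=
      isCompact_Icc.of_isClosed_subset hAclosed Set.inter_subset_left
    have hAne : A.Nonempty := ⟨t₀, ⟨le_of_lt ht₀', le_refl _⟩, le_of_lt hcon⟩
    obtain ⟨T, hTA, hTleast⟩ := hAcompact.exists_isLeast hAne
    have hT0 : 0 ≤ T := hTA.1.1
    have hTt₀ : T ≤ t₀ := hTA.1.2
    have hgT : 0.04 ≤ g T := hTA.2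
    have hTpos : 0 < T := by
      rcases lt_or_eq_of_le hT0 with h' | h'
      · exact h'
      · exfalso; rw [← h'] at hgT; linarith
    have hlt : ∀ t ∈ Set.Ico (0:ℝ) T, g t < 0.04 := by
      intro t ⟨ht0, htT⟩
      by_contra hge
      push_neg at hge
      exact absurd (hTleast ⟨⟨ht0, le_trans (le_of_lt htT) hTt₀⟩, hge⟩) (not_le.mpr htT)
    have hhc : ContinuousOn h (Set.Icc 0 T) := fun t ht =>
      ((hhderiv t ht.1).continuousAt).continuousWithinAt
    have hanti : AntitoneOn h (Set.Icc 0 T) := by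
      apply antitoneOn_of_deriv_nonpos (convex_Icc 0 T) hhc
      · intro t ht
        rw [interior_Icc] at ht
        exact ((hhderiv t (le_of_lt ht.1)).differentiableAt).differentiableWithinAt
      intro t ht
      rw [interior_Icc] at ht
      have ht0 : (0:ℝ) ≤ t := le_of_lt ht.1
      rw [(hhderiv t ht0).deriv]
      have hglt : g t < 0.04 := hlt t ⟨ht0, ht.2⟩
      have hexp : 0 < Real.exp (1.08 * t) := Real.exp_pos _
      have key : 1.08 * (g t - 0.04)
          + (2 * x₁ t * ((x₁ t) ^ 2 - 2 * x₁ t + x₂ t)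
            + 2 * x₂ t * (x₁ t + (x₂ t) ^ 2 - 2 * x₂ t)) ≤ 0 := by
        have hs : (x₁ t) ^ 2 + (x₂ t) ^ 2 ≤ 0.04 := le_of_lt hglt
        have ha : (0:ℝ) ≤ 0.2 - x₁ t := by nlinarith [sq_nonneg (x₂ t)]
        have hb : (0:ℝ) ≤ 0.2 - x₂ t := by nlinarith [sq_nonneg (x₁ t)]
        nlinarith [sq_nonneg (x₁ t - x₂ t), mul_nonneg ha (sq_nonneg (x₁ t)),
          mul_nonneg hb (sq_nonneg (x₂ t))]
      nlinarith [mul_nonneg (le_of_lt hexp) (neg_nonneg.mpr key)]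
    have hT' : h T ≤ h 0 :=
      hanti ⟨le_refl 0, hT0⟩ ⟨hT0, le_refl T⟩ hT0
    have h0 : h 0 ≤ -0.03 := by
      simp only [hh, mul_zero, Real.exp_zero, one_mul]
      linarith
    have hTpos' : 0 ≤ h T := by
      have hexp : 0 < Real.exp (1.08 * T) := Real.exp_pos _
      have : 0 ≤ g T - 0.04 := by linarith
      exact mul_nonneg (le_of_lt hexp) this
    linarith
  intro t ht
  refine ⟨main t ht, ?_⟩
  intro hbad
  have := main t ht
  linarith
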